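/- Let X = (X⁻, X⁺) be a subfactor of G. Then the projection YX = ((Y⁻ ⊓ X⁺) ⊔ X⁻, (Y⁺ ⊓ X⁺) ⊔ X⁻) of any subfactor Y = (Y⁻, Y⁺) in X is again a subfactor: (Y⁻ ⊓ X⁺) ⊔ X⁻ is normal in (Y⁺ ⊓ X⁺) ⊔ X⁻. -/

import Mathlib

private lemma key_conj {G : Type*} [Group G] (Xm Xp Ym Yp : Subgroup G)
    (hX : Xm ≤ Xp) (hXn : (Xm.subgroupOf Xp).Normal)
    (hY : Ym ≤ Yp) (hYn : (Ym.subgroupOf Yp).Normal) :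
    ∀ g ∈ Yp ⊓ Xp, ∀ n ∈ (Ym ⊓ Xp) ⊔ Xm, g * n * g⁻¹ ∈ (Ym ⊓ Xp) ⊔ Xm := by
  rw [Subgroup.normal_subgroupOf_iff hX] at hXn
  rw [Subgroup.normal_subgroupOf_iff hY] at hYn
  intro g hg n hn
  obtain ⟨hgY, hgX⟩ := hg
  rw [Subgroup.sup_eq_closure] at hn
  induction hn using Subgroup.closure_induction with
  | mem x hx =>
    rcases hx with hx | hx
    · exact Subgroup.mem_sup_left ⟨hYn x g hx.1 hgY, Xp.mul_mem (Xp.mul_mem hgX hx.2) (Xp.inv_mem hgX)⟩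
    · exact Subgroup.mem_sup_right (hXn x g hx hgX)
  | one => simpa using Subgroup.one_mem _
  | mul a b _ _ ha hb =>
    have : g * (a * b) * g⁻¹ = (g * a * g⁻¹) * (g * b * g⁻¹) := by group
    rw [this]; exact Subgroup.mul_mem _ ha hb
  | inv a _ ha =>
    have : g * a⁻¹ * g⁻¹ = (g * a * g⁻¹)⁻¹ := by group
    rw [this]; exact Subgroup.inv_mem _ ha

theorem stmt_13 {G : Type*} [Group G] (Xm Xp Ym Yp : Subgroup G)
    (hX : Xm ≤ Xp) (hXn : (Xm.subgroupOf Xp).Normal)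
    (hY : Ym ≤ Yp) (hYn : (Ym.subgroupOf Yp).Normal) :
    (Ym ⊓ Xp) ⊔ Xm ≤ (Yp ⊓ Xp) ⊔ Xm ∧
    (((Ym ⊓ Xp) ⊔ Xm).subgroupOf ((Yp ⊓ Xp) ⊔ Xm)).Normal := by
  have hle : (Ym ⊓ Xp) ⊔ Xm ≤ (Yp ⊓ Xp) ⊔ Xm :=
    sup_le_sup_right (inf_le_inf_right _ hY) _
  refine ⟨hle, (Subgroup.normal_subgroupOf_iff hle).2 ?_⟩
  have hnorm : (Yp ⊓ Xp) ⊔ Xm ≤ Subgroup.normalizer (((Ym ⊓ Xp) ⊔ Xm : Subgroup G) : Set G) := by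
    refine sup_le ?_ (le_trans le_sup_right Subgroup.le_normalizer)
    intro g hg
    rw [Subgroup.mem_normalizer_iff]
    intro n
    constructor
    · exact fun hn => key_conj Xm Xp Ym Yp hX hXn hY hYn g hg n hn
    · intro hn
      have h2 := key_conj Xm Xp Ym Yp hX hXn hY hYn g⁻¹ (inv_mem hg) _ hn
      simpa [mul_assoc] using h2
  exact fun h k hh hk => (Subgroup.mem_normalizer_iff.1 (hnorm hk) h).1 hh
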